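/- (Theorem 3, pairwise scalar form.) Let Σ be a symmetric positive definite real p×p matrix (p ≥ 3), P = Σ⁻¹, and let L be a real p×p matrix satisfying L·Σ + Σ·Lᵀ = 2·I_p. Fix distinct indices j ≠ k and let c denote the set of remaining p−2 indices. Define the conditional variances σ_j := Σ_{j,j} − Σ_{j,c}·(Σ_{c,c})⁻¹·Σ_{c,j} and σ_k := Σ_{k,k} − Σ_{k,c}·(Σ_{c,c})⁻¹·Σ_{c,k}, the conditional covariance σ_{jk} := Σ_{j,k} − Σ_{j,c}·(Σ_{c,c})⁻¹·Σ_{c,k}, and the conditional expectations e_{jk} := L_{j,k} + Σ_{j,c}·(Σ_{c,c})⁻¹·(P_{c,k} − L_{c,k}) and e_{kj} := L_{k,j} + Σ_{k,c}·(Σ_{c,c})⁻¹·(P_{c,j} − L_{c,j}) (these are the conditional means E(Y_{j,k} | Y_{c,k} = P_{c,k}) and E(Y_{k,j} | Y_{c,j} = P_{c,j}) of Gaussian vectors Y_{·,i} ~ N(L_{·,i}, Σ)). Then e_{jk}·(σ_{jk}²/σ_j − σ_k) + e_{kj}·(σ_{jk}²/σ_k − σ_j) = σ_{jk}/σ_j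 + σ_{jk}/σ_k. -/

import Mathlib

open Matrix

private lemma sum_split {p : ℕ} {j k : Fin p} (hjk : j ≠ k) (f : Fin p → ℝ) :
    ∑ i, f i = f j + f k + ∑ a : {i : Fin p // i ≠ j ∧ i ≠ k}, f (a : Fin p) := by
  classical
  have h2 : ∑ a : {i : Fin p // i ≠ j ∧ i ≠ k}, f (a : Fin p)
      = ∑ i ∈ Finset.univ.filter (fun i => i ≠ j ∧ i ≠ k), f i :=
    (Finset.sum_subtype _ (by simp) f).symm
  have hdisj : Disjoint ({j, k} : Finset (Fin p))
      (Finset.univ.filter (fun i => i ≠ j ∧ i ≠ k)) := by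
    rw [Finset.disjoint_left]
    intro a ha
    simp only [Finset.mem_insert, Finset.mem_singleton] at ha
    simp only [Finset.mem_filter]
    rcases ha with rfl | rfl <;> tauto
  have h1 : ∑ i ∈ (({j, k} : Finset (Fin p)) ∪
      Finset.univ.filter (fun i => i ≠ j ∧ i ≠ k)), f i = ∑ i, f i := by
    congr 1
    ext i
    by_cases h : i = j <;> by_cases h' : i = k <;> simp [h, h']
  rw [← h1, Finset.sum_union hdisj, Finset.sum_pair hjk, h2]


set_option maxHeartbeats 1000000 in
/-- Theorem 3, pairwise scalar form. `Sig` is symmetric positive definite (`p ≥ 3`),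
`P = Sig⁻¹`, and `L` satisfies the Lyapunov equation. For distinct indices `j ≠ k` with
`c` the remaining indices (the subtype `{i // i ≠ j ∧ i ≠ k}`), the conditional variances
`σj, σk`, conditional covariance `σjk`, and conditional expectations `ejk, ekj` satisfy
`ejk * (σjk²/σj - σk) + ekj * (σjk²/σk - σj) = σjk/σj + σjk/σk`. -/
theorem stmt_5 (p : ℕ) (hp : 3 ≤ p) (Sig L : Matrix (Fin p) (Fin p) ℝ)
    (hSigSymm : Sigᵀ = Sig) (hSigPD : Sig.PosDef)
    (hLyap : L * Sig + Sig * Lᵀ = (2 : ℝ) • (1 : Matrix (Fin p) (Fin p) ℝ))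
    (j k : Fin p) (hjk : j ≠ k)
    (Scc : Matrix {i : Fin p // i ≠ j ∧ i ≠ k} {i : Fin p // i ≠ j ∧ i ≠ k} ℝ)
    (hScc : ∀ a b : {i : Fin p // i ≠ j ∧ i ≠ k}, Scc a b = Sig (a : Fin p) (b : Fin p))
    (σj σk σjk ejk ekj : ℝ)
    (hσj : σj = Sig j j -
      (fun a : {i : Fin p // i ≠ j ∧ i ≠ k} => Sig j (a : Fin p)) ⬝ᵥ
        (Scc⁻¹ *ᵥ fun a : {i : Fin p // i ≠ j ∧ i ≠ k} => Sig (a : Fin p) j))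
    (hσk : σk = Sig k k -
      (fun a : {i : Fin p // i ≠ j ∧ i ≠ k} => Sig k (a : Fin p)) ⬝ᵥ
        (Scc⁻¹ *ᵥ fun a : {i : Fin p // i ≠ j ∧ i ≠ k} => Sig (a : Fin p) k))
    (hσjk : σjk = Sig j k -
      (fun a : {i : Fin p // i ≠ j ∧ i ≠ k} => Sig j (a : Fin p)) ⬝ᵥ
        (Scc⁻¹ *ᵥ fun a : {i : Fin p // i ≠ j ∧ i ≠ k} => Sig (a : Fin p) k))
    (hejk : ejk = L j k +
      (fun a : {i : Fin p // i ≠ j ∧ i ≠ k} => Sig j (a : Fin p)) ⬝ᵥ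
        (Scc⁻¹ *ᵥ fun a : {i : Fin p // i ≠ j ∧ i ≠ k} =>
          (Sig⁻¹) (a : Fin p) k - L (a : Fin p) k))
    (hekj : ekj = L k j +
      (fun a : {i : Fin p // i ≠ j ∧ i ≠ k} => Sig k (a : Fin p)) ⬝ᵥ
        (Scc⁻¹ *ᵥ fun a : {i : Fin p // i ≠ j ∧ i ≠ k} =>
          (Sig⁻¹) (a : Fin p) j - L (a : Fin p) j)) :
    ejk * (σjk ^ 2 / σj - σk) + ekj * (σjk ^ 2 / σk - σj) = σjk / σj + σjk / σk := by
  classical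
  have hsymm : ∀ a b : Fin p, Sig a b = Sig b a := by
    intro a b
    conv_rhs => rw [← hSigSymm, Matrix.transpose_apply]
  -- Scc is positive definite
  have hSccPD : Scc.PosDef := by
    refine Matrix.PosDef.of_dotProduct_mulVec_pos ?_ ?_
    · ext a b
      rw [Matrix.conjTranspose_apply, star_trivial, hScc, hScc]
      exact hsymm _ _
    · intro x hx
      set y : Fin p → ℝ := fun i => if h : i ≠ j ∧ i ≠ k then x ⟨i, h⟩ else 0 with hy
      have hyj : y j = 0 := by simp [hy]
      have hyk : y k = 0 := by simp [hy]
      have hyc : ∀ a : {i : Fin p // i ≠ j ∧ i ≠ k}, y a = x a := by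
        intro a; simp only [hy]; rw [dif_pos a.2]
      have hy0 : y ≠ 0 := by
        intro h0
        apply hx
        funext a
        have := congrFun h0 (a : Fin p)
        rw [hyc a] at this
        exact this
      have h1 := hSigPD.dotProduct_mulVec_pos hy0
      have h2 : star y ⬝ᵥ (Sig *ᵥ y) = star x ⬝ᵥ (Scc *ᵥ x) := by
        simp only [star_trivial]
        show (∑ i, y i * (Sig *ᵥ y) i) = ∑ a, x a * (Scc *ᵥ x) a
        rw [sum_split hjk (fun i => y i * (Sig *ᵥ y) i), hyj, hyk]
        simp only [zero_mul, add_zero, zero_add]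
        apply Finset.sum_congr rfl
        intro a _
        rw [hyc a]
        congr 1
        show (fun m => Sig (a : Fin p) m) ⬝ᵥ y = (fun b => Scc a b) ⬝ᵥ x
        rw [dotProduct, dotProduct,
          sum_split hjk (fun m => Sig (a : Fin p) m * y m), hyj, hyk]
        simp only [mul_zero, add_zero, zero_add]
        apply Finset.sum_congr rfl
        intro b _
        rw [hyc b, hScc]
      rw [← h2]
      exact h1
  have hdetScc : IsUnit Scc.det := hSccPD.det_pos.ne'.isUnit
  have hScc1 : Scc * Scc⁻¹ = 1 := Matrix.mul_nonsing_inv _ hdetScc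
  have hScc2 : Scc⁻¹ * Scc = 1 := Matrix.nonsing_inv_mul _ hdetScc
  have hSccT : Sccᵀ = Scc := by
    ext a b; rw [Matrix.transpose_apply, hScc, hScc]; exact hsymm _ _
  have hSccInvT : (Scc⁻¹)ᵀ = Scc⁻¹ := by
    rw [Matrix.transpose_nonsing_inv, hSccT]
  have hdetSig : IsUnit Sig.det := hSigPD.det_pos.ne'.isUnit
  have hPS : Sig⁻¹ * Sig = 1 := Matrix.nonsing_inv_mul _ hdetSig
  have hSP : Sig * Sig⁻¹ = 1 := Matrix.mul_nonsing_inv _ hdetSig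
  -- vectors
  set wj : {i : Fin p // i ≠ j ∧ i ≠ k} → ℝ :=
    Scc⁻¹ *ᵥ fun a : {i : Fin p // i ≠ j ∧ i ≠ k} => Sig (a : Fin p) j with hwj
  set wk : {i : Fin p // i ≠ j ∧ i ≠ k} → ℝ :=
    Scc⁻¹ *ᵥ fun a : {i : Fin p // i ≠ j ∧ i ≠ k} => Sig (a : Fin p) k with hwk
  set aj : Fin p → ℝ := fun i =>
    if h : i = j then 1 else if h' : i = k then 0 else -wj ⟨i, ⟨h, h'⟩⟩ with haj
  set ak : Fin p → ℝ := fun i =>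
    if h : i = j then 0 else if h' : i = k then 1 else -wk ⟨i, ⟨h, h'⟩⟩ with hak
  have haj_j : aj j = 1 := by simp [haj]
  have haj_k : aj k = 0 := by simp [haj, Ne.symm hjk]
  have haj_c : ∀ a : {i : Fin p // i ≠ j ∧ i ≠ k}, aj a = -wj a := by
    intro a
    simp only [haj]
    rw [dif_neg a.2.1, dif_neg a.2.2]
  have hak_j : ak j = 0 := by simp [hak]
  have hak_k : ak k = 1 := by simp [hak, Ne.symm hjk]
  have hak_c : ∀ a : {i : Fin p // i ≠ j ∧ i ≠ k}, ak a = -wk a := by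
    intro a
    simp only [hak]
    rw [dif_neg a.2.1, dif_neg a.2.2]
  -- generic dot products with aj, ak
  have hdot_aj : ∀ g : Fin p → ℝ, aj ⬝ᵥ g
      = g j - wj ⬝ᵥ (fun a : {i : Fin p // i ≠ j ∧ i ≠ k} => g a) := by
    intro g
    rw [dotProduct, sum_split hjk (fun i => aj i * g i), haj_j, haj_k,
      dotProduct]
    simp only [haj_c, one_mul, zero_mul, add_zero, neg_mul, Finset.sum_neg_distrib]
    ring
  have hdot_ak : ∀ g : Fin p → ℝ, ak ⬝ᵥ g
      = g k - wk ⬝ᵥ (fun a : {i : Fin p // i ≠ j ∧ i ≠ k} => g a) := by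
    intro g
    rw [dotProduct, sum_split hjk (fun i => ak i * g i), hak_j, hak_k,
      dotProduct]
    simp only [hak_c, one_mul, zero_mul, add_zero, neg_mul, Finset.sum_neg_distrib]
    ring
  -- Sj, Sk
  set Sj : Fin p → ℝ := fun i => if i = j then σj else if i = k then σjk else 0 with hSjd
  set Sk : Fin p → ℝ := fun i => if i = j then σjk else if i = k then σk else 0 with hSkd
  have hSj_j : Sj j = σj := by simp [hSjd]
  have hSj_k : Sj k = σjk := by simp [hSjd, Ne.symm hjk]
  have hSj_c : ∀ a : {i : Fin p // i ≠ j ∧ i ≠ k}, Sj a = 0 := by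
    intro a; simp [hSjd, a.2.1, a.2.2]
  have hSk_j : Sk j = σjk := by simp [hSkd]
  have hSk_k : Sk k = σk := by simp [hSkd, Ne.symm hjk]
  have hSk_c : ∀ a : {i : Fin p // i ≠ j ∧ i ≠ k}, Sk a = 0 := by
    intro a; simp [hSkd, a.2.1, a.2.2]
  have hdotSj : ∀ u : Fin p → ℝ, u ⬝ᵥ Sj = u j * σj + u k * σjk := by
    intro u
    rw [dotProduct, sum_split hjk (fun i => u i * Sj i), hSj_j, hSj_k]
    simp only [hSj_c, mul_zero]
    rw [Finset.sum_const_zero, add_zero]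
  have hdotSk : ∀ u : Fin p → ℝ, u ⬝ᵥ Sk = u j * σjk + u k * σk := by
    intro u
    rw [dotProduct, sum_split hjk (fun i => u i * Sk i), hSk_j, hSk_k]
    simp only [hSk_c, mul_zero]
    rw [Finset.sum_const_zero, add_zero]
  have hSjdot : ∀ u : Fin p → ℝ, Sj ⬝ᵥ u = σj * u j + σjk * u k := by
    intro u
    rw [dotProduct_comm, hdotSj]; ring
  have hSkdot : ∀ u : Fin p → ℝ, Sk ⬝ᵥ u = σjk * u j + σk * u k := by
    intro u
    rw [dotProduct_comm, hdotSk]; ring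
  -- symmetric-inverse dot helper
  have hmoveScc : ∀ u v : {i : Fin p // i ≠ j ∧ i ≠ k} → ℝ,
      u ⬝ᵥ (Scc⁻¹ *ᵥ v) = (Scc⁻¹ *ᵥ u) ⬝ᵥ v := by
    intro u v
    rw [Matrix.dotProduct_mulVec]
    conv_lhs => rw [← hSccInvT]
    rw [Matrix.vecMul_transpose]
  -- Sig *ᵥ aj = Sj
  have hSaj : Sig *ᵥ aj = Sj := by
    funext i
    show (fun m => Sig i m) ⬝ᵥ aj = Sj i
    rw [dotProduct_comm, hdot_aj]
    by_cases hij : i = j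
    · rw [hij, hSj_j, hσj, dotProduct_comm]
    · by_cases hik : i = k
      · rw [hik, hSj_k, hσjk]
        have e0 : (fun a : {i : Fin p // i ≠ j ∧ i ≠ k} => Sig k (a : Fin p))
            = fun a : {i : Fin p // i ≠ j ∧ i ≠ k} => Sig (a : Fin p) k := by
          funext a; exact hsymm _ _
        rw [e0, dotProduct_comm, hmoveScc, ← hwk]
        have e1 : (fun a : {i : Fin p // i ≠ j ∧ i ≠ k} => Sig (a : Fin p) j) ⬝ᵥ wk
            = (fun a : {i : Fin p // i ≠ j ∧ i ≠ k} => Sig j (a : Fin p)) ⬝ᵥ wk := by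
          congr 1; funext a; exact hsymm _ _
        rw [dotProduct_comm wk, e1, hsymm k j]
      · have e1 : wj ⬝ᵥ (fun a : {i : Fin p // i ≠ j ∧ i ≠ k} => Sig i (a : Fin p))
            = (Scc *ᵥ wj) ⟨i, ⟨hij, hik⟩⟩ := by
          rw [dotProduct_comm]
          show _ = (fun b => Scc ⟨i, ⟨hij, hik⟩⟩ b) ⬝ᵥ wj
          congr 1
          funext b
          rw [hScc]
        have e2 : Scc *ᵥ wj = fun a : {i : Fin p // i ≠ j ∧ i ≠ k} => Sig (a : Fin p) j := by
          rw [hwj, Matrix.mulVec_mulVec, hScc1, Matrix.one_mulVec]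
        rw [e1, e2]
        simp [hSjd, hij, hik]
  have hSak : Sig *ᵥ ak = Sk := by
    funext i
    show (fun m => Sig i m) ⬝ᵥ ak = Sk i
    rw [dotProduct_comm, hdot_ak]
    by_cases hij : i = j
    · rw [hij, hSk_j, hσjk, dotProduct_comm]
    · by_cases hik : i = k
      · rw [hik, hSk_k, hσk, dotProduct_comm]
      · have e1 : wk ⬝ᵥ (fun a : {i : Fin p // i ≠ j ∧ i ≠ k} => Sig i (a : Fin p))
            = (Scc *ᵥ wk) ⟨i, ⟨hij, hik⟩⟩ := by
          rw [dotProduct_comm]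
          show _ = (fun b => Scc ⟨i, ⟨hij, hik⟩⟩ b) ⬝ᵥ wk
          congr 1
          funext b
          rw [hScc]
        have e2 : Scc *ᵥ wk = fun a : {i : Fin p // i ≠ j ∧ i ≠ k} => Sig (a : Fin p) k := by
          rw [hwk, Matrix.mulVec_mulVec, hScc1, Matrix.one_mulVec]
        rw [e1, e2]
        simp [hSkd, hij, hik]
  -- dot products among aj, ak
  have hajak : aj ⬝ᵥ ak = wj ⬝ᵥ wk := by
    rw [hdot_aj ak, hak_j]
    have e : (fun a : {i : Fin p // i ≠ j ∧ i ≠ k} => ak a) = -wk := funext fun a => hak_c a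
    rw [e, dotProduct_neg]
    ring
  have hajaj : aj ⬝ᵥ aj = 1 + wj ⬝ᵥ wj := by
    rw [hdot_aj aj, haj_j]
    have e : (fun a : {i : Fin p // i ≠ j ∧ i ≠ k} => aj a) = -wj := funext fun a => haj_c a
    rw [e, dotProduct_neg]
    ring
  have hakak : ak ⬝ᵥ ak = 1 + wk ⬝ᵥ wk := by
    rw [hdot_ak ak, hak_k]
    have e : (fun a : {i : Fin p // i ≠ j ∧ i ≠ k} => ak a) = -wk := funext fun a => hak_c a
    rw [e, dotProduct_neg]
    ring
  -- positivity
  have hajSaj : aj ⬝ᵥ (Sig *ᵥ aj) = σj := by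
    rw [hSaj, hdotSj, haj_j, haj_k]; ring
  have hakSak : ak ⬝ᵥ (Sig *ᵥ ak) = σk := by
    rw [hSak, hdotSk, hak_j, hak_k]; ring
  have haj0 : aj ≠ 0 := by
    intro h
    have h' := congrFun h j
    rw [haj_j] at h'
    simp at h'
  have hak0 : ak ≠ 0 := by
    intro h
    have h' := congrFun h k
    rw [hak_k] at h'
    simp at h'
  have hσj_pos : 0 < σj := by
    have h := hSigPD.dotProduct_mulVec_pos haj0
    rwa [star_trivial, hajSaj] at h
  have hσk_pos : 0 < σk := by
    have h := hSigPD.dotProduct_mulVec_pos hak0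
    rwa [star_trivial, hakSak] at h
  have hd_pos : 0 < σj * σk - σjk ^ 2 := by
    set b : Fin p → ℝ := σk • aj - σjk • ak with hb
    have hb0 : b ≠ 0 := by
      intro h
      have h' := congrFun h j
      simp only [hb, Pi.sub_apply, Pi.smul_apply, smul_eq_mul, Pi.zero_apply,
        haj_j, hak_j] at h'
      nlinarith [hσk_pos]
    have hq := hSigPD.dotProduct_mulVec_pos hb0
    have hSb : Sig *ᵥ b = σk • Sj - σjk • Sk := by
      rw [hb, Matrix.mulVec_sub, Matrix.mulVec_smul, Matrix.mulVec_smul, hSaj, hSak]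
    rw [star_trivial, hSb, hb] at hq
    rw [sub_dotProduct, smul_dotProduct, smul_dotProduct,
      dotProduct_sub, dotProduct_sub, dotProduct_smul,
      dotProduct_smul, dotProduct_smul, dotProduct_smul,
      hdotSj aj, hdotSj ak, hdotSk aj, hdotSk ak,
      haj_j, haj_k, hak_j, hak_k] at hq
    simp only [smul_eq_mul] at hq
    nlinarith [hq, hσk_pos]
  -- Lyapunov quadratic identities
  have hquad : ∀ u v : Fin p → ℝ, u ⬝ᵥ ((L * Sig + Sig * Lᵀ) *ᵥ v) = 2 * (u ⬝ᵥ v) := by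
    intro u v
    rw [hLyap, Matrix.smul_mulVec, Matrix.one_mulVec, dotProduct_smul,
      smul_eq_mul]
  have hSig_move : ∀ u v : Fin p → ℝ, u ⬝ᵥ (Sig *ᵥ v) = (Sig *ᵥ u) ⬝ᵥ v := by
    intro u v
    rw [Matrix.dotProduct_mulVec]
    conv_lhs => rw [← hSigSymm]
    rw [Matrix.vecMul_transpose]
  have hexp : ∀ (u v Su Sv : Fin p → ℝ), Sig *ᵥ u = Su → Sig *ᵥ v = Sv →
      u ⬝ᵥ (L *ᵥ Sv) + Su ⬝ᵥ (Lᵀ *ᵥ v) = 2 * (u ⬝ᵥ v) := by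
    intro u v Su Sv hu hv
    have h := hquad u v
    rw [Matrix.add_mulVec, dotProduct_add, ← Matrix.mulVec_mulVec,
      ← Matrix.mulVec_mulVec, hv, hSig_move, hu] at h
    exact h
  have hLTcol : ∀ (v : Fin p → ℝ) (c : Fin p), (Lᵀ *ᵥ v) c = v ⬝ᵥ (fun i => L i c) := by
    intro v c
    show (fun m => Lᵀ c m) ⬝ᵥ v = _
    rw [dotProduct_comm]
    rfl
  have hLSj : L *ᵥ Sj = fun i => L i j * σj + L i k * σjk := by
    funext i
    show (fun m => L i m) ⬝ᵥ Sj = _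
    rw [hdotSj]
  have hLSk : L *ᵥ Sk = fun i => L i j * σjk + L i k * σk := by
    funext i
    show (fun m => L i m) ⬝ᵥ Sk = _
    rw [hdotSk]
  have hdotsplit : ∀ (u g h : Fin p → ℝ) (c d : ℝ),
      u ⬝ᵥ (fun i => g i * c + h i * d) = c * (u ⬝ᵥ g) + d * (u ⬝ᵥ h) := by
    intro u g h c d
    simp only [dotProduct, Finset.mul_sum, ← Finset.sum_add_distrib]
    apply Finset.sum_congr rfl
    intro i _
    ring
  have Eq1 : σjk * (aj ⬝ᵥ fun i => L i j) + σk * (aj ⬝ᵥ fun i => L i k)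
      + (σj * (ak ⬝ᵥ fun i => L i j) + σjk * (ak ⬝ᵥ fun i => L i k))
      = 2 * (wj ⬝ᵥ wk) := by
    have h := hexp aj ak Sj Sk hSaj hSak
    rw [hLSk, hdotsplit aj (fun i => L i j) (fun i => L i k) σjk σk, hSjdot,
      hLTcol ak j, hLTcol ak k, hajak] at h
    exact h
  have Eq2 : σj * (aj ⬝ᵥ fun i => L i j) + σjk * (aj ⬝ᵥ fun i => L i k)
      + (σj * (aj ⬝ᵥ fun i => L i j) + σjk * (aj ⬝ᵥ fun i => L i k))
      = 2 * (1 + wj ⬝ᵥ wj) := by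
    have h := hexp aj aj Sj Sj hSaj hSaj
    rw [hLSj, hdotsplit aj (fun i => L i j) (fun i => L i k) σj σjk, hSjdot,
      hLTcol aj j, hLTcol aj k, hajaj] at h
    exact h
  have Eq3 : σjk * (ak ⬝ᵥ fun i => L i j) + σk * (ak ⬝ᵥ fun i => L i k)
      + (σjk * (ak ⬝ᵥ fun i => L i j) + σk * (ak ⬝ᵥ fun i => L i k))
      = 2 * (1 + wk ⬝ᵥ wk) := by
    have h := hexp ak ak Sk Sk hSak hSak
    rw [hLSk, hdotsplit ak (fun i => L i j) (fun i => L i k) σjk σk, hSkdot,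
      hLTcol ak j, hLTcol ak k, hakak] at h
    exact h
  -- entries of the inverse
  have hPSj : Sig⁻¹ *ᵥ Sj = aj := by
    rw [← hSaj, Matrix.mulVec_mulVec, hPS, Matrix.one_mulVec]
  have hPSk : Sig⁻¹ *ᵥ Sk = ak := by
    rw [← hSak, Matrix.mulVec_mulVec, hPS, Matrix.one_mulVec]
  have E1 : Sig⁻¹ j j * σj + Sig⁻¹ j k * σjk = 1 := by
    have h := congrFun hPSj j
    rw [haj_j, show (Sig⁻¹ *ᵥ Sj) j = (fun m => Sig⁻¹ j m) ⬝ᵥ Sj from rfl, hdotSj] at h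
    exact h
  have E2 : Sig⁻¹ k j * σj + Sig⁻¹ k k * σjk = 0 := by
    have h := congrFun hPSj k
    rw [haj_k, show (Sig⁻¹ *ᵥ Sj) k = (fun m => Sig⁻¹ k m) ⬝ᵥ Sj from rfl, hdotSj] at h
    exact h
  have E3 : Sig⁻¹ j j * σjk + Sig⁻¹ j k * σk = 0 := by
    have h := congrFun hPSk j
    rw [hak_j, show (Sig⁻¹ *ᵥ Sk) j = (fun m => Sig⁻¹ j m) ⬝ᵥ Sk from rfl, hdotSk] at h
    exact h
  have E4 : Sig⁻¹ k j * σjk + Sig⁻¹ k k * σk = 1 := by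
    have h := congrFun hPSk k
    rw [hak_k, show (Sig⁻¹ *ᵥ Sk) k = (fun m => Sig⁻¹ k m) ⬝ᵥ Sk from rfl, hdotSk] at h
    exact h
  -- the c-block columns of the inverse
  have hPckv : (fun a : {i : Fin p // i ≠ j ∧ i ≠ k} => Sig⁻¹ (a : Fin p) k)
      = -(Sig⁻¹ j k • wj) - Sig⁻¹ k k • wk := by
    have hstep : Scc *ᵥ (fun a : {i : Fin p // i ≠ j ∧ i ≠ k} => Sig⁻¹ (a : Fin p) k)
        = -(Sig⁻¹ j k • fun a : {i : Fin p // i ≠ j ∧ i ≠ k} => Sig (a : Fin p) j)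
          - Sig⁻¹ k k • fun a : {i : Fin p // i ≠ j ∧ i ≠ k} => Sig (a : Fin p) k := by
      funext a
      have h0 := congrFun (congrFun hSP (a : Fin p)) k
      rw [Matrix.mul_apply, sum_split hjk (fun m => Sig (a : Fin p) m * Sig⁻¹ m k),
        Matrix.one_apply_ne a.2.2] at h0
      show (fun b => Scc a b) ⬝ᵥ (fun b : {i : Fin p // i ≠ j ∧ i ≠ k} => Sig⁻¹ (b : Fin p) k)
          = _
      rw [dotProduct]
      have e : ∀ b : {i : Fin p // i ≠ j ∧ i ≠ k},
          Scc a b * Sig⁻¹ (b : Fin p) k = Sig (a : Fin p) (b : Fin p) * Sig⁻¹ (b : Fin p) k := by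
        intro b; rw [hScc]
      rw [Finset.sum_congr rfl (fun b _ => e b)]
      show _ = -(Sig⁻¹ j k * Sig (a : Fin p) j) - Sig⁻¹ k k * Sig (a : Fin p) k
      linarith [h0]
    have h2 : (fun a : {i : Fin p // i ≠ j ∧ i ≠ k} => Sig⁻¹ (a : Fin p) k)
        = Scc⁻¹ *ᵥ ((-(Sig⁻¹ j k • fun a : {i : Fin p // i ≠ j ∧ i ≠ k} => Sig (a : Fin p) j))
          - Sig⁻¹ k k • fun a : {i : Fin p // i ≠ j ∧ i ≠ k} => Sig (a : Fin p) k) := by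
      rw [← hstep, Matrix.mulVec_mulVec, hScc2, Matrix.one_mulVec]
    rw [h2, Matrix.mulVec_sub, Matrix.mulVec_neg, Matrix.mulVec_smul, Matrix.mulVec_smul,
      ← hwj, ← hwk]
  have hPcjv : (fun a : {i : Fin p // i ≠ j ∧ i ≠ k} => Sig⁻¹ (a : Fin p) j)
      = -(Sig⁻¹ j j • wj) - Sig⁻¹ k j • wk := by
    have hstep : Scc *ᵥ (fun a : {i : Fin p // i ≠ j ∧ i ≠ k} => Sig⁻¹ (a : Fin p) j)
        = -(Sig⁻¹ j j • fun a : {i : Fin p // i ≠ j ∧ i ≠ k} => Sig (a : Fin p) j)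
          - Sig⁻¹ k j • fun a : {i : Fin p // i ≠ j ∧ i ≠ k} => Sig (a : Fin p) k := by
      funext a
      have h0 := congrFun (congrFun hSP (a : Fin p)) j
      rw [Matrix.mul_apply, sum_split hjk (fun m => Sig (a : Fin p) m * Sig⁻¹ m j),
        Matrix.one_apply_ne a.2.1] at h0
      show (fun b => Scc a b) ⬝ᵥ (fun b : {i : Fin p // i ≠ j ∧ i ≠ k} => Sig⁻¹ (b : Fin p) j)
          = _
      rw [dotProduct]
      have e : ∀ b : {i : Fin p // i ≠ j ∧ i ≠ k},
          Scc a b * Sig⁻¹ (b : Fin p) j = Sig (a : Fin p) (b : Fin p) * Sig⁻¹ (b : Fin p) j := by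
        intro b; rw [hScc]
      rw [Finset.sum_congr rfl (fun b _ => e b)]
      show _ = -(Sig⁻¹ j j * Sig (a : Fin p) j) - Sig⁻¹ k j * Sig (a : Fin p) k
      linarith [h0]
    have h2 : (fun a : {i : Fin p // i ≠ j ∧ i ≠ k} => Sig⁻¹ (a : Fin p) j)
        = Scc⁻¹ *ᵥ ((-(Sig⁻¹ j j • fun a : {i : Fin p // i ≠ j ∧ i ≠ k} => Sig (a : Fin p) j))
          - Sig⁻¹ k j • fun a : {i : Fin p // i ≠ j ∧ i ≠ k} => Sig (a : Fin p) k) := by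
      rw [← hstep, Matrix.mulVec_mulVec, hScc2, Matrix.one_mulVec]
    rw [h2, Matrix.mulVec_sub, Matrix.mulVec_neg, Matrix.mulVec_smul, Matrix.mulVec_smul,
      ← hwj, ← hwk]
  have hwjPck : wj ⬝ᵥ (fun a : {i : Fin p // i ≠ j ∧ i ≠ k} => Sig⁻¹ (a : Fin p) k)
      = -(Sig⁻¹ j k * (wj ⬝ᵥ wj)) - Sig⁻¹ k k * (wj ⬝ᵥ wk) := by
    rw [hPckv, dotProduct_sub, dotProduct_neg, dotProduct_smul,
      dotProduct_smul, smul_eq_mul, smul_eq_mul]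
  have hwkPcj : wk ⬝ᵥ (fun a : {i : Fin p // i ≠ j ∧ i ≠ k} => Sig⁻¹ (a : Fin p) j)
      = -(Sig⁻¹ j j * (wj ⬝ᵥ wk)) - Sig⁻¹ k j * (wk ⬝ᵥ wk) := by
    rw [hPcjv, dotProduct_sub, dotProduct_neg, dotProduct_smul,
      dotProduct_smul, smul_eq_mul, smul_eq_mul, dotProduct_comm wk wj]
  -- conditional expectations in scalar form
  have hmove2j : ∀ z : {i : Fin p // i ≠ j ∧ i ≠ k} → ℝ,
      (fun a : {i : Fin p // i ≠ j ∧ i ≠ k} => Sig (a : Fin p) j) ⬝ᵥ (Scc⁻¹ *ᵥ z)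
        = wj ⬝ᵥ z := by
    intro z
    rw [hmoveScc, ← hwj]
  have hmove2k : ∀ z : {i : Fin p // i ≠ j ∧ i ≠ k} → ℝ,
      (fun a : {i : Fin p // i ≠ j ∧ i ≠ k} => Sig (a : Fin p) k) ⬝ᵥ (Scc⁻¹ *ᵥ z)
        = wk ⬝ᵥ z := by
    intro z
    rw [hmoveScc, ← hwk]
  have hejk2 : ejk = (aj ⬝ᵥ fun i => L i k)
      + wj ⬝ᵥ (fun a : {i : Fin p // i ≠ j ∧ i ≠ k} => Sig⁻¹ (a : Fin p) k) := by
    rw [hejk]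
    have e0 : (fun a : {i : Fin p // i ≠ j ∧ i ≠ k} => Sig j (a : Fin p))
        = fun a : {i : Fin p // i ≠ j ∧ i ≠ k} => Sig (a : Fin p) j :=
      funext fun a => hsymm _ _
    rw [e0, hmove2j]
    have e1 : (fun a : {i : Fin p // i ≠ j ∧ i ≠ k} => Sig⁻¹ (a : Fin p) k - L (a : Fin p) k)
        = (fun a : {i : Fin p // i ≠ j ∧ i ≠ k} => Sig⁻¹ (a : Fin p) k)
          - (fun a : {i : Fin p // i ≠ j ∧ i ≠ k} => L (a : Fin p) k) := rfl
    rw [e1, dotProduct_sub]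
    simp only [hdot_aj]
    ring
  have hekj2 : ekj = (ak ⬝ᵥ fun i => L i j)
      + wk ⬝ᵥ (fun a : {i : Fin p // i ≠ j ∧ i ≠ k} => Sig⁻¹ (a : Fin p) j) := by
    rw [hekj]
    have e0 : (fun a : {i : Fin p // i ≠ j ∧ i ≠ k} => Sig k (a : Fin p))
        = fun a : {i : Fin p // i ≠ j ∧ i ≠ k} => Sig (a : Fin p) k :=
      funext fun a => hsymm _ _
    rw [e0, hmove2k]
    have e1 : (fun a : {i : Fin p // i ≠ j ∧ i ≠ k} => Sig⁻¹ (a : Fin p) j - L (a : Fin p) j)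
        = (fun a : {i : Fin p // i ≠ j ∧ i ≠ k} => Sig⁻¹ (a : Fin p) j)
          - (fun a : {i : Fin p // i ≠ j ∧ i ≠ k} => L (a : Fin p) j) := rfl
    rw [e1, dotProduct_sub]
    simp only [hdot_ak]
    ring
  have hejk3 : ejk = (aj ⬝ᵥ fun i => L i k)
      - Sig⁻¹ j k * (wj ⬝ᵥ wj) - Sig⁻¹ k k * (wj ⬝ᵥ wk) := by
    rw [hejk2, hwjPck]; ring
  have hekj3 : ekj = (ak ⬝ᵥ fun i => L i j)
      - Sig⁻¹ j j * (wj ⬝ᵥ wk) - Sig⁻¹ k j * (wk ⬝ᵥ wk) := by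
    rw [hekj2, hwkPcj]; ring
  -- scalar endgame
  have hPjj_eq : (σj * σk - σjk ^ 2) * Sig⁻¹ j j = σk := by
    linear_combination σk * E1 - σjk * E3
  have hPjk_eq : (σj * σk - σjk ^ 2) * Sig⁻¹ j k = -σjk := by
    linear_combination σj * E3 - σjk * E1
  have hPkj_eq : (σj * σk - σjk ^ 2) * Sig⁻¹ k j = -σjk := by
    linear_combination σk * E2 - σjk * E4
  have hPkk_eq : (σj * σk - σjk ^ 2) * Sig⁻¹ k k = σj := by
    linear_combination σj * E4 - σjk * E2
  have key : (σj * σk - σjk ^ 2) * (σk * (aj ⬝ᵥ fun i => L i k) + σj * (ak ⬝ᵥ fun i => L i j))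
      = 2 * σj * σk * (wj ⬝ᵥ wk) - σjk * σk * (1 + wj ⬝ᵥ wj) - σjk * σj * (1 + wk ⬝ᵥ wk) := by
    linear_combination (σj * σk) * Eq1 - (σjk * σk / 2) * Eq2 - (σjk * σj / 2) * Eq3
  have hnum : ejk * ((σjk ^ 2 - σj * σk) * σk) + ekj * ((σjk ^ 2 - σj * σk) * σj)
      - (σjk * σk + σjk * σj) = 0 := by
    linear_combination (-(σj * σk - σjk ^ 2) * σk) * hejk3
      + (-(σj * σk - σjk ^ 2) * σj) * hekj3 - key
      + (σk * (wj ⬝ᵥ wj)) * hPjk_eq + (σk * (wj ⬝ᵥ wk)) * hPkk_eq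
      + (σj * (wj ⬝ᵥ wk)) * hPjj_eq + (σj * (wk ⬝ᵥ wk)) * hPkj_eq
  have hσj0 : σj ≠ 0 := ne_of_gt hσj_pos
  have hσk0 : σk ≠ 0 := ne_of_gt hσk_pos
  have expand : ejk * (σjk ^ 2 / σj - σk) + ekj * (σjk ^ 2 / σk - σj) - (σjk / σj + σjk / σk)
      = (ejk * ((σjk ^ 2 - σj * σk) * σk) + ekj * ((σjk ^ 2 - σj * σk) * σj)
        - (σjk * σk + σjk * σj)) / (σj * σk) := by
    field_simp
  have hz : ejk * (σjk ^ 2 / σj - σk) + ekj * (σjk ^ 2 / σk - σj)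
      - (σjk / σj + σjk / σk) = 0 := by
    rw [expand, hnum, zero_div]
  linarith [hz]
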